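/- For a nonnegative absolutely continuous random variable X with support [0,u] (u finite), cdf F, and mean E(X), the failure extropy satisfies E_f(X) ≤ -(1/(2u))[u - E(X)]². -/

import Mathlib

open MeasureTheory

/-- For a nonnegative absolutely continuous random variable `X` with
support `[0,u]` (`u` finite), cdf `F` and mean `E X`, the failure extropy
`E_f(X) = -(1/2)∫₀ᵘ F²` satisfies `E_f(X) ≤ -(1/(2u))(u - E X)²`. -/
theorem failure_extropy_upper_bound
    {Ω : Type*} [MeasurableSpace Ω] (μ : Measure Ω) [IsProbabilityMeasure μ]
    (X : Ω → ℝ) (hX : Measurable X) (u : ℝ) (hu : 0 < u)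
    (hsupp : ∀ ω, X ω ∈ Set.Icc 0 u)
    (F : ℝ → ℝ) (hF : ∀ x, F x = (μ {ω | X ω ≤ x}).toReal) :
    -(1/2) * ∫ x in (0:ℝ)..u, (F x) ^ 2 ≤ -(1/(2*u)) * (u - ∫ ω, X ω ∂μ) ^ 2 := by
  have hmeas : ∀ t : ℝ, MeasurableSet {ω | X ω ≤ t} := fun t =>
    hX measurableSet_Iic
  have hF0 : ∀ t, 0 ≤ F t := fun t => by rw [hF]; exact ENNReal.toReal_nonneg
  have hFmono : Monotone F := by
    intro a b hab
    rw [hF, hF]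
    exact ENNReal.toReal_mono (measure_ne_top _ _)
      (measure_mono fun ω h => le_trans h hab)
  have hFint : IntervalIntegrable F volume 0 u :=
    (hFmono.monotoneOn _).intervalIntegrable
  have hFsqint : IntervalIntegrable (fun x => F x ^ 2) volume 0 u := by
    have : MonotoneOn (fun x => F x ^ 2) (Set.uIcc 0 u) := fun a _ b _ hab =>
      pow_le_pow_left₀ (hF0 a) (hFmono hab) 2
    exact this.intervalIntegrable
  set I := ∫ x in (0:ℝ)..u, F x with hI
  set J := ∫ x in (0:ℝ)..u, F x ^ 2 with hJ
  -- Cauchy-Schwarz: I^2 ≤ u * J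
  have key : I ^ 2 ≤ u * J := by
    have h0 : 0 ≤ ∫ x in (0:ℝ)..u, (F x - I / u) ^ 2 :=
      intervalIntegral.integral_nonneg hu.le (fun x _ => sq_nonneg _)
    have hexp : ∫ x in (0:ℝ)..u, (F x - I / u) ^ 2
        = J - 2 * (I / u) * I + (I / u) ^ 2 * u := by
      have heq : ∀ x : ℝ, (F x - I / u) ^ 2
          = F x ^ 2 - 2 * (I / u) * F x + (I / u) ^ 2 := fun x => by ring
      simp_rw [heq]
      rw [intervalIntegral.integral_add (hFsqint.sub (hFint.const_mul _))
          intervalIntegrable_const,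
        intervalIntegral.integral_sub hFsqint (hFint.const_mul _),
        intervalIntegral.integral_const_mul, intervalIntegral.integral_const]
      simp [← hI, ← hJ]
      ring
    rw [hexp] at h0
    have h2 : 0 ≤ J - I ^ 2 / u := by
      have : 2 * (I / u) * I - (I / u) ^ 2 * u = I ^ 2 / u := by
        field_simp; ring
      nlinarith [h0]
    have h3 : I ^ 2 / u ≤ J := by linarith
    have := (div_le_iff₀ hu).mp h3
    linarith
  -- mean formula: ∫ X = u - I
  have hXint : Integrable X μ := by
    refine (integrable_const u).mono' hX.aestronglyMeasurable (ae_of_all _ fun ω => ?_)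
    have h := hsupp ω
    rw [Real.norm_eq_abs, abs_of_nonneg h.1]
    exact h.2
  have hmean : ∫ ω, X ω ∂μ = u - I := by
    rw [hXint.integral_eq_integral_meas_lt (ae_of_all _ fun ω => (hsupp ω).1)]
    have hg_eq : ∀ t : ℝ, (μ {ω | t < X ω}).toReal = 1 - F t := by
      intro t
      have hc : {ω | t < X ω} = {ω | X ω ≤ t}ᶜ := by ext ω; simp [not_le]
      rw [hc, measure_compl (hmeas t) (measure_ne_top _ _), measure_univ,
        ENNReal.toReal_sub_of_le prob_le_one ENNReal.one_ne_top, ENNReal.toReal_one, hF]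
    have hzero : ∀ t : ℝ, u ≤ t → (μ {ω | t < X ω}).toReal = 0 := by
      intro t ht
      have : {ω | t < X ω} = ∅ := by
        ext ω
        simp only [Set.mem_setOf_eq, Set.mem_empty_iff_false, iff_false, not_lt]
        exact le_trans (hsupp ω).2 ht
      simp [this]
    have hstep : ∫ t in Set.Ioi (0:ℝ), (μ {ω | t < X ω}).toReal
        = ∫ t in Set.Ioc (0:ℝ) u, (μ {ω | t < X ω}).toReal := by
      rw [show ∫ t in Set.Ioi (0:ℝ), (μ {ω | t < X ω}).toReal
          = ∫ t in Set.Ioi (0:ℝ),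
              (Set.Ioc (0:ℝ) u).indicator (fun t => (μ {ω | t < X ω}).toReal) t from ?_,
        setIntegral_indicator measurableSet_Ioc]
      · rw [Set.inter_eq_self_of_subset_right Set.Ioc_subset_Ioi_self]
      · refine setIntegral_congr_fun measurableSet_Ioi fun t ht => ?_
        by_cases htu : t ≤ u
        · rw [Set.indicator_of_mem (Set.mem_Ioc.mpr ⟨ht, htu⟩)]
        · rw [Set.indicator_of_notMem (fun h => htu h.2), hzero t (le_of_not_ge htu)]
    simp only [measureReal_def]
    rw [hstep, ← intervalIntegral.integral_of_le hu.le]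
    have : ∫ t in (0:ℝ)..u, (μ {ω | t < X ω}).toReal
        = ∫ t in (0:ℝ)..u, (1 - F t) := by
      exact intervalIntegral.integral_congr fun t _ => hg_eq t
    rw [this, intervalIntegral.integral_sub intervalIntegrable_const hFint]
    simp [← hI]
  rw [hmean]
  have hId : u - (u - I) = I := by ring
  rw [hId]
  rw [neg_mul, neg_mul, neg_le_neg_iff, div_mul_eq_mul_div, div_mul_eq_mul_div,
    div_le_div_iff₀ (by positivity) (by positivity)]
  nlinarith [key]
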